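/- Let m, p, n be positive natural numbers with p ∣ m, n ≥ 3, and realize G(m,p,n) as the subgroup of (Fin n → ZMod m) ⋊ S_n of pairs (ν,σ) with Σ ν(i) in the subgroup generated by p. Then for all k, l ∈ ZMod m and all pairs i < j and s < t in Fin n, the elements θ^k(ij) := (k·(e_i − e_j), (i j)) and θ^l(st) := (l·(e_s − e_t), (s t)) are conjugate in G(m,p,n). -/

import Mathlib

/-- Permutation action of `Equiv.Perm (Fin n)` on `Fin n → ZMod m`, as multiplicative
automorphisms of the (multiplicatively written) group of exponent vectors. -/
def permAut (m n : ℕ) : Equiv.Perm (Fin n) →* MulAut (Multiplicative (Fin n → ZMod m)) where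
  toFun σ :=
    { toFun := fun ν => Multiplicative.ofAdd (Multiplicative.toAdd ν ∘ σ.symm)
      invFun := fun ν => Multiplicative.ofAdd (Multiplicative.toAdd ν ∘ σ)
      left_inv := fun ν => by
        show Multiplicative.ofAdd ((Multiplicative.toAdd ν ∘ ⇑σ.symm) ∘ ⇑σ) = ν
        simp [Function.comp_def]
      right_inv := fun ν => by
        show Multiplicative.ofAdd ((Multiplicative.toAdd ν ∘ ⇑σ) ∘ ⇑σ.symm) = ν
        simp [Function.comp_def]
      map_mul' := fun ν μ => rfl }
  map_one' := rfl
  map_mul' := fun σ τ => rfl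

/-- The wreath product `(ZMod m)^n ⋊ S_n`. -/
abbrev Wreath (m n : ℕ) := SemidirectProduct (Multiplicative (Fin n → ZMod m))
  (Equiv.Perm (Fin n)) (permAut m n)

/-- Sum of the exponent vector, a group homomorphism on the wreath product. -/
def sumHom (m n : ℕ) : Wreath m n →* Multiplicative (ZMod m) where
  toFun x := Multiplicative.ofAdd (∑ i, Multiplicative.toAdd x.left i)
  map_one' := by simp
  map_mul' x y := by
    show Multiplicative.ofAdd (∑ i, (Multiplicative.toAdd x.left +
        Multiplicative.toAdd y.left ∘ (x.right).symm) i) = _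
    rw [← ofAdd_add]
    congr 1
    simp only [Pi.add_apply]
    rw [Finset.sum_add_distrib]
    congr 1
    exact Fintype.sum_equiv x.right.symm _ _ (fun i => rfl)

/-- The complex reflection group `G(m,p,n)` realized as a subgroup of the wreath product. -/
def Gmpn (m p n : ℕ) : Subgroup (Wreath m n) :=
  (AddSubgroup.toSubgroup (AddSubgroup.zmultiples ((p : ZMod m)))).comap (sumHom m n)

/-- The reflection `θ^k(ij)` in the wreath product. -/
def theta {m n : ℕ} (k : ZMod m) (i j : Fin n) : Wreath m n :=
  ⟨Multiplicative.ofAdd (k • (Pi.single i 1 - Pi.single j 1)), Equiv.swap i j⟩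

/-- For `n ≥ 3`, all order-two reflections `θ^k(ij)` (`i < j`) are conjugate
in `G(m,p,n)`. -/
theorem stmt_12 (m p n : ℕ) (hm : 0 < m) (hp : 0 < p) (hpm : p ∣ m) (hn : 3 ≤ n)
    (k l : ZMod m) (i j s t : Fin n) (hij : i < j) (hst : s < t) :
    ∃ g ∈ Gmpn m p n, g * theta k i j * g⁻¹ = theta l s t := by
  have hijne : i ≠ j := ne_of_lt hij
  have hstne : s ≠ t := ne_of_lt hst
  obtain ⟨r, hr⟩ : (({s, t} : Finset (Fin n))ᶜ).Nonempty := by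
    rw [← Finset.card_pos, Finset.card_compl, Fintype.card_fin]
    have h2 : ({s, t} : Finset (Fin n)).card ≤ 2 :=
      le_trans (Finset.card_insert_le _ _) (by simp)
    omega
  rw [Finset.mem_compl, Finset.mem_insert, Finset.mem_singleton] at hr
  push_neg at hr
  obtain ⟨hrs, hrt⟩ := hr
  set σ : Equiv.Perm (Fin n) := Equiv.swap (Equiv.swap i s j) t * Equiv.swap i s with hσ
  have hσi : σ i = s := by
    simp only [hσ, Equiv.Perm.mul_apply, Equiv.swap_apply_left]
    refine Equiv.swap_apply_of_ne_of_ne ?_ hstne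
    intro h
    exact hijne (((Equiv.swap i s).injective
      (h.symm.trans (Equiv.swap_apply_left i s).symm)).symm)
  have hσj : σ j = t := by
    simp only [hσ, Equiv.Perm.mul_apply, Equiv.swap_apply_left]
  set ν : Fin n → ZMod m := (l - k) • (Pi.single s 1 - Pi.single r 1) with hν
  have hνval : ∀ x, ν x = (if x = s then l - k else 0) - (if x = r then l - k else 0) := by
    intro x
    simp only [hν, Pi.smul_apply, Pi.sub_apply, Pi.single_apply, smul_eq_mul, mul_sub,
      mul_ite, mul_one, mul_zero]
  have hsum : ∑ x, ν x = 0 := by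
    simp [hνval, Finset.sum_sub_distrib, Finset.sum_ite_eq' Finset.univ]
  refine ⟨⟨Multiplicative.ofAdd ν, σ⟩, ?_, ?_⟩
  · rw [Gmpn, Subgroup.mem_comap]
    have hs : sumHom m n ⟨Multiplicative.ofAdd ν, σ⟩ = 1 := by
      show Multiplicative.ofAdd (∑ x, ν x) = 1
      rw [hsum]
      rfl
    rw [hs]
    exact one_mem _
  · refine SemidirectProduct.ext ?_ ?_
    · simp only [theta, SemidirectProduct.mul_left, SemidirectProduct.mul_right,
        SemidirectProduct.inv_left, SemidirectProduct.inv_right]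
      have hpA : ∀ (τ : Equiv.Perm (Fin n)) (μ : Multiplicative (Fin n → ZMod m)),
          permAut m n τ μ = Multiplicative.ofAdd (Multiplicative.toAdd μ ∘ τ.symm) :=
        fun _ _ => rfl
      simp only [hpA]
      apply Multiplicative.toAdd.injective
      funext x
      simp only [toAdd_mul, toAdd_ofAdd, Pi.add_apply, Function.comp_apply,
        MulEquiv.coe_mk, Equiv.coe_fn_mk, toAdd_inv, Pi.neg_apply, Equiv.Perm.coe_mul,
        Pi.smul_apply, Pi.sub_apply, Pi.single_apply, smul_sub, smul_ite, smul_zero]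
      have e1 : (Equiv.symm σ⁻¹) ((Equiv.symm (σ * Equiv.swap i j)) x)
          = σ (Equiv.swap i j (σ.symm x)) := rfl
      rw [e1]
      have hsymm : ∀ y, σ.symm x = y ↔ x = σ y := fun y => Equiv.symm_apply_eq σ
      rcases eq_or_ne x s with hxs | hxs
      · have h1 : σ.symm x = i := by rw [hsymm, hσi, hxs]
        subst hxs
        rw [h1]
        simp only [Equiv.swap_apply_left, hσj, hνval, smul_eq_mul, mul_one]
        simp [hijne, Ne.symm hijne, hstne, Ne.symm hstne, hrs, hrt, Ne.symm hrs, Ne.symm hrt]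
      rcases eq_or_ne x t with hxt | hxt
      · have h1 : σ.symm x = j := by rw [hsymm, hσj, hxt]
        subst hxt
        rw [h1]
        simp only [Equiv.swap_apply_right, hσi, hνval, smul_eq_mul, mul_one]
        simp [hijne, Ne.symm hijne, hstne, Ne.symm hstne, hrs, hrt, Ne.symm hrs, Ne.symm hrt]
        ring
      · have h1 : σ.symm x ≠ i := by rw [Ne, hsymm, hσi]; exact hxs
        have h2 : σ.symm x ≠ j := by rw [Ne, hsymm, hσj]; exact hxt
        rw [if_neg h1, if_neg h2, Equiv.swap_apply_of_ne_of_ne h1 h2,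
          Equiv.apply_symm_apply, if_neg hxs, if_neg hxt, hνval]
        ring
    · show σ * Equiv.swap i j * σ⁻¹ = Equiv.swap s t
      rw [← Equiv.swap_apply_apply, hσi, hσj]
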